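/- Volume of a 4-simplex from the Gram matrix of its volume normals: let v₀, v₁, v₂, v₃, v₄ ∈ ℝ⁴ be affinely independent, set eᵢ = vᵢ − v₀ for i = 1,…,4, and let E be the 4×4 matrix with columns e₁, e₂, e₃, e₄. For each i let mᵢ ∈ ℝ⁴ be the (unique) vector such that η(mᵢ, v) = det(E with i-th column replaced by v) for all v ∈ ℝ⁴. Let L be the 4×4 matrix L_{ij} = η(mᵢ, mⱼ). Then det L = −(det E)⁶, and the spacetime volume Ω = |det E| / 4! of the 4-simplex with vertices v₀,…,v₄ satisfies Ω = (1/4!) · |det L|^{1/6}. -/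

import Mathlib

open Matrix


/-- The Minkowski bilinear form on `ℝ⁴` with signature `(-,+,+,+)`. -/
def eta (x y : Fin 4 → ℝ) : ℝ :=
  -(x 0 * y 0) + x 1 * y 1 + x 2 * y 2 + x 3 * y 3

/-- The 4×4 matrix whose columns are the vectors `e 0, e 1, e 2, e 3`. -/
def cols (e : Fin 4 → Fin 4 → ℝ) : Matrix (Fin 4) (Fin 4) ℝ :=
  Matrix.of fun i j => e j i

/-- The Minkowski metric matrix `diag(-1,1,1,1)`. -/
def gmat : Matrix (Fin 4) (Fin 4) ℝ := Matrix.diagonal ![-1, 1, 1, 1]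

lemma eta_eq (x y : Fin 4 → ℝ) : eta x y = x ⬝ᵥ (gmat *ᵥ y) := by
  simp [eta, dotProduct, Matrix.mulVec, Fin.sum_univ_four, gmat, Matrix.diagonal]

lemma gmat_mul_gmat : gmat * gmat = 1 := by
  simp [gmat, Matrix.diagonal_mul_diagonal]
  ext i j
  fin_cases i <;> simp [Matrix.diagonal, Matrix.one_apply]

lemma det_gmat : gmat.det = -1 := by
  simp [gmat, Matrix.det_diagonal, Fin.prod_univ_four]

theorem simplex_volume_from_normals (v : Fin 5 → Fin 4 → ℝ)
    (hv : AffineIndependent ℝ v)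
    (e : Fin 4 → Fin 4 → ℝ) (he : ∀ i, e i = v i.succ - v 0)
    (m : Fin 4 → Fin 4 → ℝ)
    (hm : ∀ i w, eta (m i) w = ((cols e).updateCol i w).det) :
    (Matrix.of fun i j => eta (m i) (m j)).det = -((cols e).det ^ 6) ∧
    |(cols e).det| / 24 =
      (1 / 24) * |(Matrix.of fun i j => eta (m i) (m j)).det| ^ ((1 : ℝ) / 6) := by
  set E := cols e with hE
  set M : Matrix (Fin 4) (Fin 4) ℝ := Matrix.of fun i j => m i j with hM
  have hMG : M * gmat = E.adjugate := by
    ext i k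
    have h1 : eta (m i) (Pi.single k 1) = (M * gmat) i k := by
      rw [eta_eq]
      fin_cases k <;>
        simp [Matrix.mul_apply, dotProduct, Matrix.mulVec, Fin.sum_univ_four, gmat,
          Matrix.diagonal, hM, Pi.single_apply] <;> ring
    have h2 : eta (m i) (Pi.single k 1) = E.adjugate i k := by
      rw [hm, ← Matrix.cramer_apply, Matrix.cramer_eq_adjugate_mulVec]
      simp [Matrix.mulVec_single]
    rw [← h1, h2]
  have hMeq : M = E.adjugate * gmat := by
    calc M = M * (gmat * gmat) := by rw [gmat_mul_gmat, mul_one]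
    _ = (M * gmat) * gmat := by rw [mul_assoc]
    _ = E.adjugate * gmat := by rw [hMG]
  have hL : (Matrix.of fun i j => eta (m i) (m j)) = M * gmat * Mᵀ := by
    ext i j
    simp only [Matrix.of_apply]
    rw [eta_eq]
    simp [Matrix.mul_apply, dotProduct, Matrix.mulVec, Fin.sum_univ_four,
      Finset.mul_sum, Matrix.transpose_apply, hM]
    ring
  have hdet : (Matrix.of fun i j => eta (m i) (m j)).det = -(E.det ^ 6) := by
    rw [hL, Matrix.det_mul, Matrix.det_mul, Matrix.det_transpose, hMeq,
      Matrix.det_mul, Matrix.det_adjugate, det_gmat]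
    norm_num
    ring
  refine ⟨hdet, ?_⟩
  rw [hdet]
  have h6 : |-(E.det ^ 6)| = |E.det| ^ (6 : ℕ) := by
    rw [abs_neg, abs_pow]
  rw [h6, ← Real.rpow_natCast |E.det| 6, ← Real.rpow_mul (abs_nonneg _)]
  norm_num
  ring
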